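/- Let (Y_t)_{t≥1} be a strictly stationary process with values in [0,1] on a probability space (Ω, F, P), and let φ : [0,1] → ℝ be Borel measurable with E[φ(Y_1)²] < ∞. Assume that there exists q ∈ [0,1) such that ∑_{k=1}^∞ |Cov(φ(Y_1), φ(Y_{1+k}))| / k^q < ∞. Then (1/n) ∑_{ℓ=1}^{n} φ(Y_ℓ) → E[φ(Y_1)] almost surely as n → ∞. -/

import Mathlib

open MeasureTheory Set

/-- Strict stationarity of a process: all finite-dimensional joint laws are shift invariant. -/
def StrictlyStationary {Ω E : Type*} [MeasurableSpace Ω] [MeasurableSpace E]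
    (P : Measure Ω) (Z : ℕ → Ω → E) : Prop :=
  ∀ (k : ℕ) (t : Fin k → ℕ) (h : ℕ),
    Measure.map (fun ω => fun j => Z (t j + h) ω) P =
      Measure.map (fun ω => fun j => Z (t j) ω) P

/-- Covariance `Cov(X,Z) = E[XZ] - E[X]E[Z]`. -/
noncomputable def cov {Ω : Type*} [MeasurableSpace Ω] (P : Measure Ω) (X Z : Ω → ℝ) : ℝ :=
  ∫ ω, X ω * Z ω ∂P - (∫ ω, X ω ∂P) * (∫ ω, Z ω ∂P)

/-- If the integrals of `Wₘ²` are summable, then `Wₘ → 0` almost everywhere. -/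
lemma aux_ae_tendsto_zero_of_summable_integral_sq {Ω : Type*} [MeasurableSpace Ω]
    (P : Measure Ω) {W : ℕ → Ω → ℝ}
    (hint : ∀ m, Integrable (fun ω => (W m ω) ^ 2) P)
    (hsum : Summable fun m => ∫ ω, (W m ω) ^ 2 ∂P) :
    ∀ᵐ ω ∂P, Filter.Tendsto (fun m => W m ω) Filter.atTop (nhds 0) := by
  set g : ℕ → Ω → ENNReal := fun m ω => ENNReal.ofReal ((W m ω) ^ 2) with hg
  have hgmeas : ∀ m, AEMeasurable (g m) P := fun m =>
    ((hint m).aestronglyMeasurable.aemeasurable).ennreal_ofReal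
  have hlin : ∀ m, ∫⁻ ω, g m ω ∂P = ENNReal.ofReal (∫ ω, (W m ω) ^ 2 ∂P) := fun m =>
    (ofReal_integral_eq_lintegral_ofReal (hint m)
      (Filter.Eventually.of_forall fun ω => sq_nonneg _)).symm
  have htsum : ∫⁻ ω, ∑' m, g m ω ∂P ≠ ⊤ := by
    rw [lintegral_tsum hgmeas]
    have h1 : ∑' m, ∫⁻ ω, g m ω ∂P = ENNReal.ofReal (∑' m, ∫ ω, (W m ω) ^ 2 ∂P) := by
      rw [ENNReal.ofReal_tsum_of_nonneg (fun m => integral_nonneg fun ω => sq_nonneg _) hsum]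
      exact tsum_congr hlin
    rw [h1]
    exact ENNReal.ofReal_ne_top
  have hae : ∀ᵐ ω ∂P, ∑' m, g m ω < ⊤ := ae_lt_top' (AEMeasurable.ennreal_tsum hgmeas) htsum
  filter_upwards [hae] with ω hω
  have h1 : Filter.Tendsto (fun m => g m ω) Filter.atTop (nhds 0) :=
    ENNReal.tendsto_atTop_zero_of_tsum_ne_top hω.ne
  have h2 : Filter.Tendsto (fun m => (W m ω) ^ 2) Filter.atTop (nhds 0) := by
    have h3 := (ENNReal.tendsto_toReal (a := 0) (by simp)).comp h1
    simpa [hg, Function.comp_def, ENNReal.toReal_ofReal (sq_nonneg _)] using h3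
  rw [tendsto_zero_iff_abs_tendsto_zero]
  have h4 := (Real.continuous_sqrt.tendsto 0).comp h2
  simpa [Function.comp_def, Real.sqrt_sq_eq_abs] using h4

/-- binomial-type bound `(a+1)^(p+1) ≤ a^(p+1) + (p+1)(a+1)^p` over ℕ. -/
lemma aux_pow_bound (a : ℕ) : ∀ p : ℕ, (a + 1) ^ (p + 1) ≤ a ^ (p + 1) + (p + 1) * (a + 1) ^ p := by
  intro p
  induction p with
  | zero => simp
  | succ p ih =>
    calc (a + 1) ^ (p + 2) = (a + 1) ^ (p + 1) * (a + 1) := by ring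
    _ ≤ (a ^ (p + 1) + (p + 1) * (a + 1) ^ p) * (a + 1) := Nat.mul_le_mul_right _ ih
    _ = a ^ (p + 1) * (a + 1) + (p + 1) * (a + 1) ^ (p + 1) := by ring
    _ = a ^ (p + 2) + a ^ (p + 1) + (p + 1) * (a + 1) ^ (p + 1) := by ring
    _ ≤ a ^ (p + 2) + (a + 1) ^ (p + 1) + (p + 1) * (a + 1) ^ (p + 1) := by
        have h5 := Nat.pow_le_pow_left (Nat.le_succ a) (p + 1)
        simp only [Nat.succ_eq_add_one] at h5
        omega
    _ = a ^ (p + 2) + (p + 2) * (a + 1) ^ (p + 1) := by ring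

/-- Existence of the block index: for `n ≥ 1`, there is `m` with `(m+1)^p ≤ n < (m+2)^p`. -/
lemma aux_block (p n : ℕ) (hp : 1 ≤ p) (hn : 1 ≤ n) :
    ∃ m : ℕ, (m + 1) ^ p ≤ n ∧ n < (m + 2) ^ p := by
  classical
  set m := Nat.findGreatest (fun j => (j + 1) ^ p ≤ n) n with hm
  have h0 : (fun j => (j + 1) ^ p ≤ n) 0 := by simpa using hn
  have hspec : (m + 1) ^ p ≤ n :=
    Nat.findGreatest_spec (P := fun j => (j + 1) ^ p ≤ n) (Nat.zero_le n) h0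
  refine ⟨m, hspec, ?_⟩
  by_contra hcon
  push_neg at hcon
  have hm1n : m + 1 ≤ n := by
    calc m + 1 ≤ (m + 1) ^ p := Nat.le_self_pow (by omega) _
    _ ≤ n := hspec
  exact Nat.findGreatest_is_greatest (P := fun j => (j + 1) ^ p ≤ n)
    (Nat.lt_succ_self m) hm1n hcon

/-- pushforward equality for one coordinate of a stationary process -/
lemma aux_map1 {Ω : Type*} [MeasurableSpace Ω] (P : Measure Ω)
    (Y : ℕ → Ω → ℝ) (hYmeas : ∀ t, Measurable (Y t)) (hstat : StrictlyStationary P Y)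
    (t : ℕ) : Measure.map (Y t) P = Measure.map (Y 0) P := by
  have key := hstat 1 (fun _ => 0) t
  have he : Measurable (fun v : Fin 1 → ℝ => v 0) := measurable_pi_apply 0
  have hF : ∀ s : Fin 1 → ℕ, Measurable (fun ω => fun j : Fin 1 => Y (s j) ω) :=
    fun s => measurable_pi_lambda _ fun j => hYmeas (s j)
  have h1 := congrArg (Measure.map (fun v : Fin 1 → ℝ => v 0)) key
  rw [Measure.map_map he (hF fun _ => 0 + t), Measure.map_map he (hF fun _ => 0)] at h1
  simpa [Function.comp_def] using h1

/-- pushforward equality for pairs of coordinates of a stationary process -/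
lemma aux_map2 {Ω : Type*} [MeasurableSpace Ω] (P : Measure Ω)
    (Y : ℕ → Ω → ℝ) (hYmeas : ∀ t, Measurable (Y t)) (hstat : StrictlyStationary P Y)
    (i j h : ℕ) :
    Measure.map (fun ω => (Y (i + h) ω, Y (j + h) ω)) P
      = Measure.map (fun ω => (Y i ω, Y j ω)) P := by
  have key := hstat 2 ![i, j] h
  have he : Measurable (fun v : Fin 2 → ℝ => (v 0, v 1)) :=
    (measurable_pi_apply 0).prodMk (measurable_pi_apply 1)
  have hF : ∀ s : Fin 2 → ℕ, Measurable (fun ω => fun k : Fin 2 => Y (s k) ω) :=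
    fun s => measurable_pi_lambda _ fun k => hYmeas (s k)
  have h1 := congrArg (Measure.map (fun v : Fin 2 → ℝ => (v 0, v 1))) key
  rw [Measure.map_map he (hF fun k => ![i, j] k + h), Measure.map_map he (hF ![i, j])] at h1
  simpa [Function.comp_def] using h1

/-- integrals against equidistributed pairs agree -/
lemma aux_integral_map_eq {Ω : Type*} [MeasurableSpace Ω] (P : Measure Ω)
    {f₁ f₂ : Ω → ℝ × ℝ} (h1 : Measurable f₁) (h2 : Measurable f₂)
    (heq : Measure.map f₁ P = Measure.map f₂ P) {g : ℝ × ℝ → ℝ} (hg : Measurable g) :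
    ∫ ω, g (f₁ ω) ∂P = ∫ ω, g (f₂ ω) ∂P := by
  rw [← integral_map h1.aemeasurable hg.aestronglyMeasurable,
      ← integral_map h2.aemeasurable hg.aestronglyMeasurable, heq]

/-- product of two L² functions is integrable -/
lemma aux_mul_int {Ω : Type*} [MeasurableSpace Ω] {P : Measure Ω} {f g : Ω → ℝ}
    (hf : MemLp f 2 P) (hg : MemLp g 2 P) : Integrable (fun ω => f ω * g ω) P := by
  refine ((hf.integrable_sq.add hg.integrable_sq).div_const 2).mono'
    (hf.aestronglyMeasurable.mul hg.aestronglyMeasurable)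
    (Filter.Eventually.of_forall fun ω => ?_)
  have h := two_mul_le_add_sq (|f ω|) (|g ω|)
  rw [sq_abs, sq_abs] at h
  rw [Real.norm_eq_abs, abs_mul]
  simp only [Pi.add_apply]
  linarith

set_option maxHeartbeats 2000000 in
/-- **Remark 8: Birkhoff-type theorem.** Let `(Y t)` be a strictly stationary
`[0,1]`-valued process and `φ : [0,1] → ℝ` Borel measurable with `E[φ(Y 0)²] < ∞`.  If for
some `q ∈ [0,1)` we have `∑_{k≥1} |Cov(φ(Y 0), φ(Y k))|/k^q < ∞`, then
`(1/n) ∑_{ℓ<n} φ(Y ℓ) → E[φ(Y 0)]` almost surely. -/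
theorem stmt10 {Ω : Type*} [MeasurableSpace Ω] (P : Measure Ω) [IsProbabilityMeasure P]
    (Y : ℕ → Ω → ℝ) (hYmeas : ∀ t, Measurable (Y t))
    (hY01 : ∀ t ω, Y t ω ∈ Set.Icc (0 : ℝ) 1)
    (hstat : StrictlyStationary P Y)
    (φ : ℝ → ℝ) (hφ : Measurable φ) (hL2 : MemLp (fun ω => φ (Y 0 ω)) 2 P)
    (q : ℝ) (hq : q ∈ Set.Ico (0 : ℝ) 1)
    (hcov : Summable fun k : ℕ =>
      |cov P (fun ω => φ (Y 0 ω)) (fun ω => φ (Y (k + 1) ω))| / ((k : ℝ) + 1) ^ q) :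
    ∀ᵐ ω ∂P, Filter.Tendsto
      (fun n : ℕ => (1 / (n : ℝ)) * ∑ ℓ ∈ Finset.range n, φ (Y ℓ ω))
      Filter.atTop (nhds (∫ ω', φ (Y 0 ω') ∂P)) := by
  classical
  obtain ⟨hq0, hq1⟩ := hq
  set μ : ℝ := ∫ ω', φ (Y 0 ω') ∂P with hμdef
  set Z : ℕ → Ω → ℝ := fun t ω => φ (Y t ω) - μ with hZdef
  set S : ℕ → Ω → ℝ := fun n ω => ∑ ℓ ∈ Finset.range n, Z ℓ ω with hSdef
  set c : ℕ → ℝ := fun k => cov P (fun ω => φ (Y 0 ω)) (fun ω => φ (Y k ω)) with hcdef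
  have hcov' : Summable fun k : ℕ => |c (k + 1)| / ((k : ℝ) + 1) ^ q := hcov
  -- L² membership of each coordinate
  have hXL2 : ∀ t, MemLp (fun ω => φ (Y t ω)) 2 P := by
    intro t
    have A := memLp_map_measure_iff (p := (2 : ENNReal)) (μ := P) (f := Y t) (g := φ)
      hφ.aestronglyMeasurable (hYmeas t).aemeasurable
    have B := memLp_map_measure_iff (p := (2 : ENNReal)) (μ := P) (f := Y 0) (g := φ)
      hφ.aestronglyMeasurable (hYmeas 0).aemeasurable
    rw [aux_map1 P Y hYmeas hstat t] at A
    exact A.mp (B.mpr hL2)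
  have hXint : ∀ t, Integrable (fun ω => φ (Y t ω)) P := fun t => (hXL2 t).integrable one_le_two
  have hXXint : ∀ i j, Integrable (fun ω => φ (Y i ω) * φ (Y j ω)) P := fun i j =>
    aux_mul_int (hXL2 i) (hXL2 j)
  -- all coordinates have the same mean
  have hXmean : ∀ t, ∫ ω, φ (Y t ω) ∂P = μ := by
    intro t
    have h := aux_integral_map_eq P ((hYmeas (0 + t)).prodMk (hYmeas (0 + t)))
      ((hYmeas 0).prodMk (hYmeas 0)) (aux_map2 P Y hYmeas hstat 0 0 t)
      (g := fun pr : ℝ × ℝ => φ pr.1) (hφ.comp measurable_fst)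
    simpa [hμdef] using h
  -- stationarity of second moments
  have hXXeq : ∀ i j h : ℕ, ∫ ω, φ (Y (i + h) ω) * φ (Y (j + h) ω) ∂P
      = ∫ ω, φ (Y i ω) * φ (Y j ω) ∂P := by
    intro i j h
    exact aux_integral_map_eq P ((hYmeas (i + h)).prodMk (hYmeas (j + h)))
      ((hYmeas i).prodMk (hYmeas j)) (aux_map2 P Y hYmeas hstat i j h)
      (g := fun pr : ℝ × ℝ => φ pr.1 * φ pr.2)
      ((hφ.comp measurable_fst).mul (hφ.comp measurable_snd))
  -- centered process
  have hZL2 : ∀ t, MemLp (Z t) 2 P := fun t => (hXL2 t).sub (memLp_const μ)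
  have hZZint : ∀ i j, Integrable (fun ω => Z i ω * Z j ω) P := fun i j =>
    aux_mul_int (hZL2 i) (hZL2 j)
  -- covariance structure of the centered process
  have hZZ : ∀ i j, i ≤ j → ∫ ω, Z i ω * Z j ω ∂P = c (j - i) := by
    intro i j hij
    have h1 : ∫ ω, Z i ω * Z j ω ∂P = (∫ ω, φ (Y i ω) * φ (Y j ω) ∂P) - μ * μ := by
      have e : (fun ω => Z i ω * Z j ω) =
          fun ω => (φ (Y i ω) * φ (Y j ω) - μ * φ (Y i ω)) - (μ * φ (Y j ω) - μ * μ) := by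
        funext ω; simp only [hZdef]; ring
      rw [e]
      have I1 : Integrable (fun ω => μ * φ (Y i ω)) P := (hXint i).const_mul μ
      have I2 : Integrable (fun ω => μ * φ (Y j ω)) P := (hXint j).const_mul μ
      have I3 : Integrable (fun ω => φ (Y i ω) * φ (Y j ω) - μ * φ (Y i ω)) P :=
        (hXXint i j).sub I1
      have I4 : Integrable (fun ω => μ * φ (Y j ω) - μ * μ) P :=
        I2.sub (integrable_const (μ * μ))
      rw [integral_sub I3 I4, integral_sub (hXXint i j) I1,
        integral_sub I2 (integrable_const (μ * μ)),
        integral_const_mul, integral_const_mul, hXmean i, hXmean j, integral_const]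
      simp only [probReal_univ, smul_eq_mul, one_mul]
      ring
    have h2 : ∫ ω, φ (Y i ω) * φ (Y j ω) ∂P = ∫ ω, φ (Y 0 ω) * φ (Y (j - i) ω) ∂P := by
      have h3 := hXXeq 0 (j - i) i
      rw [Nat.zero_add, Nat.sub_add_cancel hij] at h3
      exact h3
    rw [h1, h2]
    simp only [hcdef, cov]
    rw [hXmean 0, hXmean (j - i)]
  have hZvar : ∀ t, ∫ ω, Z t ω * Z t ω ∂P = c 0 := by
    intro t
    have := hZZ t t le_rfl
    simpa using this
  have hc0 : 0 ≤ c 0 := by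
    rw [← hZvar 0]
    exact integral_nonneg fun ω => mul_self_nonneg _
  have hZZdist : ∀ i j, ∫ ω, Z i ω * Z j ω ∂P = c (Nat.dist i j) := by
    intro i j
    rcases le_total i j with hij | hij
    · rw [hZZ i j hij, Nat.dist_eq_sub_of_le hij]
    · have e : (fun ω => Z i ω * Z j ω) = fun ω => Z j ω * Z i ω := by
        funext ω; ring
      rw [e, hZZ j i hij, Nat.dist_comm, Nat.dist_eq_sub_of_le hij]
  -- row bound
  have hrow : ∀ n : ℕ, ∀ i ∈ Finset.range n,
      ∑ j ∈ Finset.range n, |c (Nat.dist i j)| ≤ 2 * ∑ d ∈ Finset.range n, |c d| := by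
    intro n i hi
    rw [Finset.mem_range] at hi
    rw [← Finset.sum_filter_add_sum_filter_not (Finset.range n) (· ≤ i), two_mul]
    have hA : ∑ j ∈ (Finset.range n).filter (· ≤ i), |c (Nat.dist i j)|
        ≤ ∑ d ∈ Finset.range n, |c d| := by
      calc ∑ j ∈ (Finset.range n).filter (· ≤ i), |c (Nat.dist i j)|
          = ∑ j ∈ (Finset.range n).filter (· ≤ i), |c (i - j)| := by
            refine Finset.sum_congr rfl fun j hj => ?_
            have hj' : j ≤ i := (Finset.mem_filter.mp hj).2
            rw [Nat.dist_comm, Nat.dist_eq_sub_of_le hj']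
        _ = ∑ d ∈ ((Finset.range n).filter (· ≤ i)).image (fun j => i - j), |c d| := by
            rw [Finset.sum_image]
            intro x hx y hy hxy
            have hx' : x ≤ i := (Finset.mem_filter.mp hx).2
            have hy' : y ≤ i := (Finset.mem_filter.mp hy).2
            simp only at hxy
            omega
        _ ≤ ∑ d ∈ Finset.range n, |c d| := by
            refine Finset.sum_le_sum_of_subset_of_nonneg ?_ fun _ _ _ => abs_nonneg _
            intro d hd
            rw [Finset.mem_image] at hd
            obtain ⟨j, hj, rfl⟩ := hd
            rw [Finset.mem_range]
            omega
    have hB : ∑ j ∈ (Finset.range n).filter (fun j => ¬ j ≤ i), |c (Nat.dist i j)|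
        ≤ ∑ d ∈ Finset.range n, |c d| := by
      calc ∑ j ∈ (Finset.range n).filter (fun j => ¬ j ≤ i), |c (Nat.dist i j)|
          = ∑ j ∈ (Finset.range n).filter (fun j => ¬ j ≤ i), |c (j - i)| := by
            refine Finset.sum_congr rfl fun j hj => ?_
            have hj' : i ≤ j := by
              have := (Finset.mem_filter.mp hj).2; omega
            rw [Nat.dist_eq_sub_of_le hj']
        _ = ∑ d ∈ ((Finset.range n).filter (fun j => ¬ j ≤ i)).image (fun j => j - i), |c d| := by
            rw [Finset.sum_image]
            intro x hx y hy hxy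
            have hx' : i < x := by have := (Finset.mem_filter.mp hx).2; omega
            have hy' : i < y := by have := (Finset.mem_filter.mp hy).2; omega
            simp only at hxy
            omega
        _ ≤ ∑ d ∈ Finset.range n, |c d| := by
            refine Finset.sum_le_sum_of_subset_of_nonneg ?_ fun _ _ _ => abs_nonneg _
            intro d hd
            rw [Finset.mem_image] at hd
            obtain ⟨j, hj, rfl⟩ := hd
            have := Finset.mem_range.mp (Finset.mem_filter.mp hj).1
            rw [Finset.mem_range]
            omega
    exact add_le_add hA hB
  -- variance of partial sums
  have hSsq : ∀ n, ∫ ω, (S n ω) ^ 2 ∂P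
      = ∑ i ∈ Finset.range n, ∑ j ∈ Finset.range n, ∫ ω, Z i ω * Z j ω ∂P := by
    intro n
    have h1 : (fun ω => (S n ω) ^ 2)
        = fun ω => ∑ i ∈ Finset.range n, ∑ j ∈ Finset.range n, Z i ω * Z j ω := by
      funext ω
      simp only [hSdef, sq]
      rw [Finset.sum_mul_sum]
    rw [h1, integral_finset_sum _ (fun i _ => integrable_finset_sum _ fun j _ => hZZint i j)]
    exact Finset.sum_congr rfl fun i _ => integral_finset_sum _ fun j _ => hZZint i j
  have hSL2 : ∀ n, MemLp (S n) 2 P := by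
    intro n
    have := memLp_finset_sum (Finset.range n) (f := fun ℓ (ω : Ω) => Z ℓ ω) (p := (2:ENNReal))
      (fun ℓ _ => hZL2 ℓ)
    simpa [hSdef] using this
  -- summability constant
  set C : ℝ := ∑' k : ℕ, |c (k + 1)| / ((k : ℝ) + 1) ^ q with hCdef
  have hC0 : 0 ≤ C := tsum_nonneg fun k => by positivity
  have hcsum : ∀ n : ℕ, 1 ≤ n →
      ∑ d ∈ Finset.range n, |c d| ≤ (|c 0| + C) * (n : ℝ) ^ q := by
    intro n hn
    have hnq1 : (1 : ℝ) ≤ (n : ℝ) ^ q := Real.one_le_rpow (by exact_mod_cast hn) hq0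
    obtain ⟨n', rfl⟩ : ∃ n', n = n' + 1 := ⟨n - 1, by omega⟩
    rw [Finset.sum_range_succ']
    have h2 : ∑ k ∈ Finset.range n', |c (k + 1)| ≤ C * ((n' + 1 : ℕ) : ℝ) ^ q := by
      calc ∑ k ∈ Finset.range n', |c (k + 1)|
          = ∑ k ∈ Finset.range n', (|c (k + 1)| / ((k : ℝ) + 1) ^ q) * ((k : ℝ) + 1) ^ q := by
            refine Finset.sum_congr rfl fun k _ => ?_
            rw [div_mul_cancel₀]
            exact (Real.rpow_pos_of_pos (by positivity) q).ne'
        _ ≤ ∑ k ∈ Finset.range n', (|c (k + 1)| / ((k : ℝ) + 1) ^ q) * (((n' + 1 : ℕ) : ℝ)) ^ q := by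
            refine Finset.sum_le_sum fun k hk => ?_
            refine mul_le_mul_of_nonneg_left ?_ (by positivity)
            refine Real.rpow_le_rpow (by positivity) ?_ hq0
            have hk' : k + 1 ≤ n' + 1 := by
              have := Finset.mem_range.mp hk; omega
            exact_mod_cast hk'
        _ = (∑ k ∈ Finset.range n', |c (k + 1)| / ((k : ℝ) + 1) ^ q) * (((n' + 1 : ℕ) : ℝ)) ^ q :=
            (Finset.sum_mul _ _ _).symm
        _ ≤ C * (((n' + 1 : ℕ) : ℝ)) ^ q := by
            refine mul_le_mul_of_nonneg_right ?_ (by positivity)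
            exact Summable.sum_le_tsum (Finset.range n') (fun k _ => by positivity) hcov'
    have h3 : |c 0| * 1 ≤ |c 0| * ((n' + 1 : ℕ) : ℝ) ^ q :=
      mul_le_mul_of_nonneg_left hnq1 (abs_nonneg _)
    have := add_le_add h2 h3
    rw [mul_one] at h3
    linarith [h2, h3]
  set K : ℝ := 2 * (|c 0| + C) with hKdef
  have hK0 : 0 ≤ K := by positivity
  have hvar : ∀ n : ℕ, 1 ≤ n → ∫ ω, (S n ω) ^ 2 ∂P ≤ K * (n : ℝ) * (n : ℝ) ^ q := by
    intro n hn
    rw [hSsq n]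
    calc ∑ i ∈ Finset.range n, ∑ j ∈ Finset.range n, ∫ ω, Z i ω * Z j ω ∂P
        ≤ ∑ i ∈ Finset.range n, ∑ j ∈ Finset.range n, |c (Nat.dist i j)| := by
          refine Finset.sum_le_sum fun i _ => Finset.sum_le_sum fun j _ => ?_
          rw [hZZdist i j]
          exact le_abs_self _
      _ ≤ ∑ i ∈ Finset.range n, 2 * ∑ d ∈ Finset.range n, |c d| :=
          Finset.sum_le_sum fun i hi => hrow n i hi
      _ = (n : ℝ) * (2 * ∑ d ∈ Finset.range n, |c d|) := by
          rw [Finset.sum_const, Finset.card_range, nsmul_eq_mul]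
      _ ≤ (n : ℝ) * (2 * ((|c 0| + C) * (n : ℝ) ^ q)) := by
          have := hcsum n hn
          have hn0 : (0 : ℝ) ≤ (n : ℝ) := Nat.cast_nonneg n
          nlinarith
      _ = K * (n : ℝ) * (n : ℝ) ^ q := by rw [hKdef]; ring
  -- choose the exponent p
  set r : ℕ := ⌈(2 : ℝ) / (1 - q)⌉₊ with hrdef
  set p : ℕ := r + 1 with hpdef
  have h1q : (0 : ℝ) < 1 - q := by linarith
  have hpq : (p : ℝ) * (1 - q) ≥ 2 := by
    have h1 : (2 : ℝ) / (1 - q) ≤ (r : ℝ) := Nat.le_ceil _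
    have h2 : (r : ℝ) ≤ (p : ℝ) := by
      rw [hpdef]; push_cast; linarith
    have h3 : (2 : ℝ) / (1 - q) ≤ (p : ℝ) := le_trans h1 h2
    calc (2 : ℝ) = (2 / (1 - q)) * (1 - q) := by field_simp
    _ ≤ (p : ℝ) * (1 - q) := mul_le_mul_of_nonneg_right h3 (le_of_lt h1q)
  set nn : ℕ → ℕ := fun m => (m + 1) ^ p with hnndef
  have hnn1 : ∀ m, 1 ≤ nn m := fun m => Nat.one_le_pow _ _ (by omega)
  have hnnpos : ∀ m, (0 : ℝ) < (nn m : ℝ) := fun m => by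
    exact_mod_cast hnn1 m
  -- subsequence variance bound
  have hsub_bound : ∀ m : ℕ, ∫ ω, (S (nn m) ω / (nn m : ℝ)) ^ 2 ∂P ≤ K / ((m : ℝ) + 1) ^ 2 := by
    intro m
    have e1 : (fun ω => (S (nn m) ω / (nn m : ℝ)) ^ 2)
        = fun ω => (S (nn m) ω) ^ 2 / ((nn m : ℝ)) ^ 2 := by
      funext ω; rw [div_pow]
    rw [e1, integral_div]
    have h1 := hvar (nn m) (hnn1 m)
    have hNpos := hnnpos m
    have h2 : (∫ ω, (S (nn m) ω) ^ 2 ∂P) / ((nn m : ℝ)) ^ 2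
        ≤ (K * (nn m : ℝ) * (nn m : ℝ) ^ q) / ((nn m : ℝ)) ^ 2 :=
      (div_le_div_iff_of_pos_right (by positivity)).mpr h1
    refine h2.trans ?_
    have e2 : (K * (nn m : ℝ) * (nn m : ℝ) ^ q) / ((nn m : ℝ)) ^ 2
        = K * (nn m : ℝ) ^ (q - 1) := by
      rw [Real.rpow_sub hNpos, Real.rpow_one, sq]
      field_simp
    rw [e2]
    have e3 : ((nn m : ℝ)) ^ (q - 1) = ((m : ℝ) + 1) ^ ((p : ℝ) * (q - 1)) := by
      have : ((nn m : ℕ) : ℝ) = ((m : ℝ) + 1) ^ (p : ℕ) := by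
        simp only [hnndef]; push_cast; ring
      rw [this, ← Real.rpow_natCast ((m : ℝ) + 1) p, ← Real.rpow_mul (by positivity)]
    rw [e3]
    have e4 : ((m : ℝ) + 1) ^ ((p : ℝ) * (q - 1)) ≤ ((m : ℝ) + 1) ^ (-2 : ℝ) := by
      refine Real.rpow_le_rpow_of_exponent_le (by push_cast; linarith [Nat.cast_nonneg (α := ℝ) m]) ?_
      nlinarith
    have e5 : ((m : ℝ) + 1) ^ (-2 : ℝ) = 1 / ((m : ℝ) + 1) ^ 2 := by
      rw [Real.rpow_neg (by positivity), one_div, ← Real.rpow_natCast ((m : ℝ) + 1) 2]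
      norm_num
    calc K * ((m : ℝ) + 1) ^ ((p : ℝ) * (q - 1)) ≤ K * (((m : ℝ) + 1) ^ (-2 : ℝ)) :=
        mul_le_mul_of_nonneg_left e4 hK0
    _ = K / ((m : ℝ) + 1) ^ 2 := by rw [e5]; ring
  -- base summable sequence
  have hbase : ∀ K' : ℝ, Summable (fun m : ℕ => K' / ((m : ℝ) + 1) ^ 2) := by
    intro K'
    have h := Real.summable_one_div_nat_pow.mpr (by norm_num : 1 < 2)
    have h2 := (summable_nat_add_iff 1).mpr h
    refine (h2.mul_left K').congr fun m => ?_
    push_cast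
    field_simp
  -- a.e. convergence along the subsequence
  have hintW1 : ∀ m, Integrable (fun ω => (S (nn m) ω / (nn m : ℝ)) ^ 2) P := by
    intro m
    have e1 : (fun ω => (S (nn m) ω / (nn m : ℝ)) ^ 2)
        = fun ω => (S (nn m) ω) ^ 2 / ((nn m : ℝ)) ^ 2 := by
      funext ω; rw [div_pow]
    rw [e1]
    exact ((hSL2 (nn m)).integrable_sq).div_const _
  have hsumW1 : Summable fun m => ∫ ω, (S (nn m) ω / (nn m : ℝ)) ^ 2 ∂P := by
    refine Summable.of_nonneg_of_le (fun m => integral_nonneg fun ω => sq_nonneg _)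
      hsub_bound (hbase K)
  have hae1 := aux_ae_tendsto_zero_of_summable_integral_sq P hintW1 hsumW1
  -- block sums
  set T : ℕ → Ω → ℝ := fun m ω => ∑ ℓ ∈ Finset.Ico (nn m) (nn (m + 1)), |Z ℓ ω| with hTdef
  have hTexp : ∀ m, (fun ω => (T m ω) ^ 2) = fun ω =>
      ∑ i ∈ Finset.Ico (nn m) (nn (m + 1)), ∑ j ∈ Finset.Ico (nn m) (nn (m + 1)),
        |Z i ω * Z j ω| := by
    intro m
    funext ω
    simp only [hTdef, sq]
    rw [Finset.sum_mul_sum]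
    exact Finset.sum_congr rfl fun i _ => Finset.sum_congr rfl fun j _ => (abs_mul _ _).symm
  have hTint : ∀ m, Integrable (fun ω => (T m ω) ^ 2) P := by
    intro m
    rw [hTexp m]
    exact integrable_finset_sum _ fun i _ => integrable_finset_sum _ fun j _ => (hZZint i j).abs
  have habsZZ : ∀ i j, ∫ ω, |Z i ω * Z j ω| ∂P ≤ c 0 := by
    intro i j
    have hb : ∀ ω, |Z i ω * Z j ω| ≤ (Z i ω * Z i ω + Z j ω * Z j ω) / 2 := by
      intro ω
      rw [abs_mul, ← abs_mul_abs_self (Z i ω), ← abs_mul_abs_self (Z j ω)]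
      nlinarith [sq_nonneg (|Z i ω| - |Z j ω|)]
    have I5 : Integrable (fun ω => Z i ω * Z i ω + Z j ω * Z j ω) P :=
      (hZZint i i).add (hZZint j j)
    have I6 : Integrable (fun ω => (Z i ω * Z i ω + Z j ω * Z j ω) / 2) P := I5.div_const 2
    have hI := integral_mono ((hZZint i j).abs) I6 hb
    rw [integral_div, integral_add (hZZint i i) (hZZint j j), hZvar i, hZvar j] at hI
    linarith
  have hTbound : ∀ m, ∫ ω, (T m ω) ^ 2 ∂P
      ≤ ((nn (m + 1) - nn m : ℕ) : ℝ) ^ 2 * c 0 := by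
    intro m
    rw [hTexp m]
    rw [integral_finset_sum _ fun i _ => integrable_finset_sum _ fun j _ => (hZZint i j).abs]
    calc ∑ i ∈ Finset.Ico (nn m) (nn (m + 1)), ∫ ω,
          (∑ j ∈ Finset.Ico (nn m) (nn (m + 1)), |Z i ω * Z j ω|) ∂P
        = ∑ i ∈ Finset.Ico (nn m) (nn (m + 1)), ∑ j ∈ Finset.Ico (nn m) (nn (m + 1)),
            ∫ ω, |Z i ω * Z j ω| ∂P := by
          exact Finset.sum_congr rfl fun i _ =>
            integral_finset_sum _ fun j _ => (hZZint i j).abs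
      _ ≤ ∑ i ∈ Finset.Ico (nn m) (nn (m + 1)), ∑ j ∈ Finset.Ico (nn m) (nn (m + 1)), c 0 :=
          Finset.sum_le_sum fun i _ => Finset.sum_le_sum fun j _ => habsZZ i j
      _ = ((nn (m + 1) - nn m : ℕ) : ℝ) ^ 2 * c 0 := by
          rw [Finset.sum_const, Finset.sum_const, Nat.card_Ico, nsmul_eq_mul, nsmul_eq_mul]
          ring
  -- length of the blocks
  have hLbound : ∀ m : ℕ, (nn (m + 1) - nn m : ℕ) ≤ p * 2 ^ r * (m + 1) ^ r := by
    intro m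
    have h1 := aux_pow_bound (m + 1) r
    have h2 : (m + 1 + 1) ^ r ≤ 2 ^ r * (m + 1) ^ r := by
      calc (m + 1 + 1) ^ r ≤ (2 * (m + 1)) ^ r := Nat.pow_le_pow_left (by omega) r
      _ = 2 ^ r * (m + 1) ^ r := by rw [mul_pow]
    have h3 : (r + 1) * (m + 1 + 1) ^ r ≤ (r + 1) * (2 ^ r * (m + 1) ^ r) :=
      Nat.mul_le_mul_left _ h2
    have h4 : nn (m + 1) ≤ nn m + p * (2 ^ r * (m + 1) ^ r) := by
      simp only [hnndef, hpdef]
      calc (m + 1 + 1) ^ (r + 1) ≤ (m + 1) ^ (r + 1) + (r + 1) * (m + 1 + 1) ^ r := h1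
      _ ≤ (m + 1) ^ (r + 1) + (r + 1) * (2 ^ r * (m + 1) ^ r) := by omega
    calc (nn (m + 1) - nn m : ℕ) ≤ p * (2 ^ r * (m + 1) ^ r) := by omega
    _ = p * 2 ^ r * (m + 1) ^ r := by ring
  -- block variance bound
  set B : ℝ := ((p : ℝ) * 2 ^ r) ^ 2 * c 0 with hBdef
  have hblock_bound : ∀ m : ℕ,
      ∫ ω, (T m ω / (nn m : ℝ)) ^ 2 ∂P ≤ B / ((m : ℝ) + 1) ^ 2 := by
    intro m
    have e1 : (fun ω => (T m ω / (nn m : ℝ)) ^ 2)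
        = fun ω => (T m ω) ^ 2 / ((nn m : ℝ)) ^ 2 := by
      funext ω; rw [div_pow]
    rw [e1, integral_div]
    have hNpos := hnnpos m
    have h1 : (∫ ω, (T m ω) ^ 2 ∂P) / ((nn m : ℝ)) ^ 2
        ≤ (((nn (m + 1) - nn m : ℕ) : ℝ) ^ 2 * c 0) / ((nn m : ℝ)) ^ 2 :=
      (div_le_div_iff_of_pos_right (by positivity)).mpr (hTbound m)
    refine h1.trans ?_
    set x : ℝ := (m : ℝ) + 1 with hxdef
    have hx1 : (1 : ℝ) ≤ x := by
      rw [hxdef]; linarith [Nat.cast_nonneg (α := ℝ) m]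
    have hx0 : (0 : ℝ) < x := by linarith
    have hL : ((nn (m + 1) - nn m : ℕ) : ℝ) ≤ (p : ℝ) * 2 ^ r * x ^ r := by
      have := hLbound m
      have hcast : (((p * 2 ^ r * (m + 1) ^ r : ℕ)) : ℝ) = (p : ℝ) * 2 ^ r * x ^ r := by
        push_cast [hxdef]; ring
      calc ((nn (m + 1) - nn m : ℕ) : ℝ) ≤ ((p * 2 ^ r * (m + 1) ^ r : ℕ) : ℝ) := by
            exact_mod_cast this
      _ = (p : ℝ) * 2 ^ r * x ^ r := hcast
    have hnncast : ((nn m : ℕ) : ℝ) = x ^ p := by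
      simp only [hnndef, hxdef]; push_cast; ring
    have hstep : (((nn (m + 1) - nn m : ℕ) : ℝ) ^ 2 * c 0) / ((nn m : ℝ)) ^ 2
        ≤ (((p : ℝ) * 2 ^ r * x ^ r) ^ 2 * c 0) / ((nn m : ℝ)) ^ 2 := by
      refine (div_le_div_iff_of_pos_right (by positivity)).mpr ?_
      refine mul_le_mul_of_nonneg_right ?_ hc0
      refine pow_le_pow_left₀ (Nat.cast_nonneg _) hL 2
    refine hstep.trans ?_
    rw [hnncast, hpdef]
    have e2 : (((p : ℝ) * 2 ^ r * x ^ r) ^ 2 * c 0) / (x ^ (r + 1)) ^ 2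
        = B / x ^ 2 := by
      rw [hBdef, hpdef]
      have hxr : x ^ r ≠ 0 := by positivity
      field_simp
      ring
    rw [← hpdef, e2]
  have hintW2 : ∀ m, Integrable (fun ω => (T m ω / (nn m : ℝ)) ^ 2) P := by
    intro m
    have e1 : (fun ω => (T m ω / (nn m : ℝ)) ^ 2)
        = fun ω => (T m ω) ^ 2 / ((nn m : ℝ)) ^ 2 := by
      funext ω; rw [div_pow]
    rw [e1]
    exact (hTint m).div_const _
  have hsumW2 : Summable fun m => ∫ ω, (T m ω / (nn m : ℝ)) ^ 2 ∂P :=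
    Summable.of_nonneg_of_le (fun m => integral_nonneg fun ω => sq_nonneg _)
      hblock_bound (hbase B)
  have hae2 := aux_ae_tendsto_zero_of_summable_integral_sq P hintW2 hsumW2
  -- final assembly
  filter_upwards [hae1, hae2] with ω h1 h2
  have key : Filter.Tendsto (fun n : ℕ => S n ω / (n : ℝ)) Filter.atTop (nhds 0) := by
    rw [Metric.tendsto_atTop]
    intro ε hε
    obtain ⟨M1, hM1⟩ := Metric.tendsto_atTop.mp h1 (ε / 2) (by positivity)
    obtain ⟨M2, hM2⟩ := Metric.tendsto_atTop.mp h2 (ε / 2) (by positivity)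
    refine ⟨(max M1 M2 + 1) ^ p, fun n hn => ?_⟩
    have hn1 : 1 ≤ n := le_trans (Nat.one_le_pow _ _ (by omega)) hn
    obtain ⟨m, hm1, hm2⟩ := aux_block p n (by omega) hn1
    have hmM : max M1 M2 ≤ m := by
      by_contra hcon
      push_neg at hcon
      have : (m + 2) ^ p ≤ (max M1 M2 + 1) ^ p := Nat.pow_le_pow_left (by omega) p
      omega
    have hd1 := hM1 m (le_trans (le_max_left _ _) hmM)
    have hd2 := hM2 m (le_trans (le_max_right _ _) hmM)
    rw [Real.dist_eq, sub_zero] at hd1 hd2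
    rw [Real.dist_eq, sub_zero]
    -- nn m = (m+1)^p ≤ n < (m+2)^p = nn (m+1)
    have hnnm : nn m ≤ n := hm1
    have hnnm1 : n ≤ nn (m + 1) := le_of_lt hm2
    have hNpos := hnnpos m
    have hnpos : (0 : ℝ) < (n : ℝ) := by exact_mod_cast hn1
    have hsplit : S n ω = S (nn m) ω + ∑ ℓ ∈ Finset.Ico (nn m) n, Z ℓ ω := by
      simp only [hSdef, Finset.range_eq_Ico]
      exact (Finset.sum_Ico_consecutive _ (Nat.zero_le _) hnnm).symm
    have habs : |S n ω| ≤ |S (nn m) ω| + T m ω := by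
      rw [hsplit]
      refine (abs_add_le _ _).trans ?_
      gcongr
      calc |∑ ℓ ∈ Finset.Ico (nn m) n, Z ℓ ω| ≤ ∑ ℓ ∈ Finset.Ico (nn m) n, |Z ℓ ω| :=
          Finset.abs_sum_le_sum_abs _ _
      _ ≤ T m ω := by
          simp only [hTdef]
          exact Finset.sum_le_sum_of_subset_of_nonneg
            (Finset.Ico_subset_Ico le_rfl hnnm1) fun _ _ _ => abs_nonneg _
    have hT0 : 0 ≤ T m ω := Finset.sum_nonneg fun _ _ => abs_nonneg _
    have hchain : |S n ω / (n : ℝ)| ≤ |S (nn m) ω / (nn m : ℝ)| + |T m ω / (nn m : ℝ)| := by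
      have e1 : |S n ω / (n : ℝ)| = |S n ω| / (n : ℝ) := by
        rw [abs_div, abs_of_pos hnpos]
      have e2 : |S (nn m) ω / (nn m : ℝ)| = |S (nn m) ω| / (nn m : ℝ) := by
        rw [abs_div, abs_of_pos hNpos]
      have e3 : |T m ω / (nn m : ℝ)| = T m ω / (nn m : ℝ) := by
        rw [abs_div, abs_of_pos hNpos, abs_of_nonneg hT0]
      rw [e1, e2, e3]
      have hcast : (nn m : ℝ) ≤ (n : ℝ) := by exact_mod_cast hnnm
      calc |S n ω| / (n : ℝ) ≤ (|S (nn m) ω| + T m ω) / (n : ℝ) :=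
          (div_le_div_iff_of_pos_right hnpos).mpr habs
      _ ≤ (|S (nn m) ω| + T m ω) / (nn m : ℝ) :=
          div_le_div_of_nonneg_left (by positivity) hNpos hcast
      _ = |S (nn m) ω| / (nn m : ℝ) + T m ω / (nn m : ℝ) := add_div _ _ _
    calc |S n ω / (n : ℝ)| ≤ |S (nn m) ω / (nn m : ℝ)| + |T m ω / (nn m : ℝ)| := hchain
    _ < ε / 2 + ε / 2 := add_lt_add hd1 hd2
    _ = ε := by ring
  -- convert back to the original averages
  have heq : (fun n : ℕ => S n ω / (n : ℝ) + μ)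
      =ᶠ[Filter.atTop] fun n : ℕ => (1 / (n : ℝ)) * ∑ ℓ ∈ Finset.range n, φ (Y ℓ ω) := by
    rw [Filter.eventuallyEq_iff_exists_mem]
    refine ⟨{n | 1 ≤ n}, Filter.mem_atTop 1, fun n hn => ?_⟩
    have hn' : (n : ℝ) ≠ 0 := by
      have : 1 ≤ n := hn
      positivity
    simp only [hSdef, hZdef]
    rw [Finset.sum_sub_distrib, Finset.sum_const, Finset.card_range]
    field_simp
    ring
  have hfin : Filter.Tendsto (fun n : ℕ => S n ω / (n : ℝ) + μ) Filter.atTop (nhds (0 + μ)) :=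
    key.add_const μ
  rw [zero_add] at hfin
  exact hfin.congr' heq
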